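/- Let f_1, …, f_m ∈ ℝ^n, let Δ^m = {ω ∈ ℝ^m : ω_i ≥ 0 for all i, Σ_{i=1}^m ω_i = 1} be the probability simplex, and define J(v) = min_{i ∈ [m]} ⟨f_i, v⟩ − (1/2)‖v‖². If ω* ∈ Δ^m minimizes ‖Σ_{i=1}^m ω_i f_i‖ over Δ^m and v* ∈ ℝ^n maximizes J over ℝ^n, then v* = Σ_{i=1}^m ω*_i f_i (Lagrange duality for the MGD direction). -/

import Mathlib

private lemma aux_limit (a b : ℝ) (hb : 0 ≤ b)
    (h : ∀ t : ℝ, 0 < t → t ≤ 1 → 0 ≤ a + t * b) : 0 ≤ a := by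
  by_contra h'
  push_neg at h'
  rcases eq_or_lt_of_le hb with hb0 | hb0
  · have := h 1 one_pos le_rfl
    rw [← hb0] at this; linarith
  · have ht : 0 < min 1 (-a / (2 * b)) := lt_min one_pos (div_pos (by linarith) (by linarith))
    have h1 := h _ ht (min_le_left _ _)
    have h2 : min 1 (-a / (2 * b)) * b ≤ -a / 2 := by
      have h3 := min_le_right 1 (-a / (2 * b))
      have h4 : (-a / (2 * b)) * b = -a / 2 := by field_simp
      nlinarith
    linarith

/-- Lagrange duality for the MGD direction: if `ω*` minimizes
`‖Σ ωᵢ fᵢ‖` over the probability simplex and `v*` maximizes the MGD objective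
`J(v) = min_i ⟪f i, v⟫ - (1/2)‖v‖²`, then `v* = Σ ω*ᵢ fᵢ`. -/
theorem stmt_1 {n m : ℕ} (hm : 0 < m) (f : Fin m → EuclideanSpace ℝ (Fin n))
    (ωstar : Fin m → ℝ) (hω0 : ∀ i, 0 ≤ ωstar i) (hω1 : ∑ i, ωstar i = 1)
    (hωmin : ∀ ω : Fin m → ℝ, (∀ i, 0 ≤ ω i) → ∑ i, ω i = 1 →
      ‖∑ i, ωstar i • f i‖ ≤ ‖∑ i, ω i • f i‖)
    (vstar : EuclideanSpace ℝ (Fin n))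
    (hmax : ∀ v : EuclideanSpace ℝ (Fin n),
      (⨅ i, (inner ℝ (f i) v : ℝ)) - (1 / 2) * ‖v‖ ^ 2 ≤
        (⨅ i, (inner ℝ (f i) vstar : ℝ)) - (1 / 2) * ‖vstar‖ ^ 2) :
    vstar = ∑ i, ωstar i • f i := by
  have hne : Nonempty (Fin m) := ⟨⟨0, hm⟩⟩
  set u : EuclideanSpace ℝ (Fin n) := ∑ i, ωstar i • f i with hu
  -- Step A: first-order optimality: ⟨f i, u⟩ ≥ ‖u‖² for all i
  have key : ∀ i, ‖u‖ ^ 2 ≤ (inner ℝ (f i) u : ℝ) := by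
    intro i
    have hstep : ∀ t : ℝ, 0 < t → t ≤ 1 →
        0 ≤ 2 * (inner ℝ u (f i - u) : ℝ) + t * ‖f i - u‖ ^ 2 := by
      intro t ht0 ht1
      set ω : Fin m → ℝ := fun j => (1 - t) * ωstar j + (if j = i then t else 0) with hωdef
      have hω0' : ∀ j, 0 ≤ ω j := by
        intro j
        have hnn : 0 ≤ (1 - t) * ωstar j := mul_nonneg (by linarith) (hω0 j)
        by_cases hj : j = i
        · subst hj; simp [hωdef]; linarith
        · simp [hωdef, hj]; linarith
      have hω1' : ∑ j, ω j = 1 := by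
        simp only [hωdef, Finset.sum_add_distrib, ← Finset.mul_sum, hω1,
          Finset.sum_ite_eq' Finset.univ i (fun _ => t), Finset.mem_univ, if_true]
        ring
      have hsum : ∑ j, ω j • f j = u + t • (f i - u) := by
        have h1 : ∑ j, ω j • f j
            = ∑ j, ((1 - t) • (ωstar j • f j)) + ∑ j, (if j = i then t • f j else 0) := by
          rw [← Finset.sum_add_distrib]
          refine Finset.sum_congr rfl fun j _ => ?_
          by_cases hj : j = i <;> simp [hωdef, hj, add_smul, mul_smul]
        rw [h1, ← Finset.smul_sum, Finset.sum_ite_eq' Finset.univ i (fun j => t • f j)]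
        simp only [Finset.mem_univ, if_true, ← hu]
        module
      have hle : ‖u‖ ≤ ‖u + t • (f i - u)‖ := by
        have := hωmin ω hω0' hω1'
        rwa [hsum] at this
      have hsq : ‖u‖ ^ 2 ≤ ‖u + t • (f i - u)‖ ^ 2 :=
        pow_le_pow_left₀ (norm_nonneg _) hle 2
      have hexp : ‖u + t • (f i - u)‖ ^ 2
          = ‖u‖ ^ 2 + 2 * (t * (inner ℝ u (f i - u) : ℝ)) + t ^ 2 * ‖f i - u‖ ^ 2 := by
        rw [norm_add_sq_real, real_inner_smul_right, norm_smul]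
        simp [mul_pow, abs_of_pos ht0]
      have h0 : 0 ≤ t * (2 * (inner ℝ u (f i - u) : ℝ) + t * ‖f i - u‖ ^ 2) := by
        nlinarith [hsq, hexp]
      nlinarith [h0, ht0]
    have h := aux_limit (2 * (inner ℝ u (f i - u) : ℝ)) (‖f i - u‖ ^ 2)
      (sq_nonneg _) hstep
    have hinner : (inner ℝ u (f i - u) : ℝ) = inner ℝ u (f i) - ‖u‖ ^ 2 := by
      rw [inner_sub_right, real_inner_self_eq_norm_sq]
    rw [real_inner_comm]
    nlinarith [h, hinner.symm ▸ h]
  -- Step B: J(vstar) ≥ J(u) ≥ ½‖u‖²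
  have hinfu : ‖u‖ ^ 2 ≤ ⨅ i, (inner ℝ (f i) u : ℝ) := le_ciInf key
  have hB : (1 / 2) * ‖u‖ ^ 2 ≤ (⨅ i, (inner ℝ (f i) vstar : ℝ)) - (1 / 2) * ‖vstar‖ ^ 2 := by
    have := hmax u
    linarith
  -- Step C: J(vstar) ≤ ⟨u, vstar⟩ - ½‖vstar‖²
  have hbdd : BddBelow (Set.range fun i => (inner ℝ (f i) vstar : ℝ)) :=
    Finite.bddBelow_range _
  have hinner : (inner ℝ u vstar : ℝ) = ∑ i, ωstar i * (inner ℝ (f i) vstar : ℝ) := by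
    rw [hu, sum_inner]
    exact Finset.sum_congr rfl fun i _ => real_inner_smul_left _ _ _
  have hC : (⨅ i, (inner ℝ (f i) vstar : ℝ)) ≤ (inner ℝ u vstar : ℝ) := by
    rw [hinner]
    calc (⨅ i, (inner ℝ (f i) vstar : ℝ))
        = ∑ i, ωstar i * (⨅ j, (inner ℝ (f j) vstar : ℝ)) := by
          rw [← Finset.sum_mul, hω1, one_mul]
      _ ≤ ∑ i, ωstar i * (inner ℝ (f i) vstar : ℝ) :=
          Finset.sum_le_sum fun i _ =>
            mul_le_mul_of_nonneg_left (ciInf_le hbdd i) (hω0 i)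
  -- Combine: ‖vstar - u‖² ≤ 0
  have hfinal : ‖vstar - u‖ ^ 2 ≤ 0 := by
    rw [norm_sub_sq_real]
    have := real_inner_comm u vstar
    linarith
  have : vstar - u = 0 := by
    have h0 : ‖vstar - u‖ ^ 2 = 0 := le_antisymm hfinal (sq_nonneg _)
    have := pow_eq_zero_iff (n := 2) (by norm_num) |>.mp h0
    exact norm_eq_zero.mp this
  exact sub_eq_zero.mp this
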